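/- Let U : ℝ³ → M₂(ℂ) take values in SU(2), satisfy the odd (G-parity) reflection symmetry U(r y) = U(y)* for all y ∈ ℝ³, and be differentiable at a point x of the fixed plane P. Then all tangential derivatives of U vanish at x: DU(x)[v] = 0 for every v ∈ ℝ³ with v₃ = 0. -/

import Mathlib

open Matrix

attribute [local instance] Matrix.frobeniusNormedAddCommGroup Matrix.frobeniusNormedSpace

/-- Reflection of `ℝ³` across the plane `{x₃ = 0}`: `(x₁, x₂, x₃) ↦ (x₁, x₂, -x₃)`. -/
def reflPlane : (Fin 3 → ℝ) → (Fin 3 → ℝ) := fun x i => if i = 2 then -x i else x i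

attribute [local instance] Matrix.frobeniusNormedRing Matrix.frobeniusNormedAlgebra

theorem stmt9 (U : (Fin 3 → ℝ) → Matrix (Fin 2) (Fin 2) ℂ)
    (hSU : ∀ y, (U y)ᴴ * U y = 1 ∧ (U y).det = 1)
    (hodd : ∀ y, U (reflPlane y) = (U y)ᴴ)
    (x : Fin 3 → ℝ) (hx : x 2 = 0) (hU : DifferentiableAt ℝ U x) :
    ∀ v : Fin 3 → ℝ, v 2 = 0 → fderiv ℝ U x v = 0 := by
  intro v hv
  set A := fderiv ℝ U x v with hA
  set M := U x with hM
  -- the reflection fixes points of the plane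
  have hfix : ∀ y : Fin 3 → ℝ, y 2 = 0 → reflPlane y = y := by
    intro y hy
    funext i
    simp only [reflPlane]
    split
    · next h => rw [h, hy, neg_zero]
    · rfl
  -- points on the line through x in direction v stay in the plane
  have hline : ∀ t : ℝ, (x + t • v) 2 = 0 := by
    intro t
    simp [hx, hv]
  -- U is Hermitian on the line, hence U * U = 1 on the line
  have hsq : ∀ t : ℝ, U (x + t • v) * U (x + t • v) = 1 := by
    intro t
    have h1 : U (x + t • v) = (U (x + t • v))ᴴ := by
      conv_lhs => rw [← hfix _ (hline t), hodd]
    nth_rewrite 1 [h1]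
    exact (hSU _).1
  -- the line map has derivative v at 0
  have hlineDeriv : HasDerivAt (fun t : ℝ => x + t • v) v 0 := by
    simpa using ((hasDerivAt_id (0:ℝ)).smul_const v).const_add x
  have hx0 : x + (0:ℝ) • v = x := by simp
  have hg : HasDerivAt (fun t : ℝ => U (x + t • v)) A 0 := by
    have h1 : HasFDerivAt U (fderiv ℝ U x) ((fun t : ℝ => x + t • v) 0) := by
      simpa [hx0] using hU.hasFDerivAt
    exact h1.comp_hasDerivAt 0 hlineDeriv
  -- differentiate U*U = 1 along the line
  have hprod : HasDerivAt (fun t : ℝ => U (x + t • v) * U (x + t • v)) (A * M + M * A) 0 := by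
    have := hg.mul hg
    simp only [hx0] at this
    exact this
  have hconst : HasDerivAt (fun _ : ℝ => (1 : Matrix (Fin 2) (Fin 2) ℂ)) 0 0 :=
    hasDerivAt_const 0 1
  have hAM : A * M + M * A = 0 := by
    have heq : (fun t : ℝ => U (x + t • v) * U (x + t • v)) =
        (fun _ : ℝ => (1 : Matrix (Fin 2) (Fin 2) ℂ)) := funext hsq
    have hconst' : HasDerivAt (fun t : ℝ => U (x + t • v) * U (x + t • v)) 0 0 := by
      rw [heq]; exact hconst
    exact (hprod.unique hconst').symm ▸ rfl
  -- M is Hermitian, M * M = 1, det M = 1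
  have hMH : Mᴴ = M := by
    conv_rhs => rw [hM, ← hfix x hx, hodd]
  have hM2 : M * M = 1 := by simpa [hx0] using hsq 0
  have hdet : M.det = 1 := (hSU x).2
  -- adjugate M = M, so M is scalar
  have hadj : M.adjugate = M := by
    have h1 : M * M.adjugate = 1 := by rw [mul_adjugate, hdet, one_smul]
    calc M.adjugate = (M * M) * M.adjugate := by rw [hM2, one_mul]
    _ = M * (M * M.adjugate) := by rw [mul_assoc]
    _ = M := by rw [h1, mul_one]
  have hadj2 := hadj
  rw [adjugate_fin_two] at hadj2
  have h01 : M 0 1 = 0 := by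
    have := congrFun (congrFun hadj2 0) 1
    simp at this
    linear_combination (-1/2 : ℂ) * this
  have h10 : M 1 0 = 0 := by
    have := congrFun (congrFun hadj2 1) 0
    simp at this
    linear_combination (-1/2 : ℂ) * this
  have h00 : M 1 1 = M 0 0 := by
    have := congrFun (congrFun hadj2 0) 0
    simpa using this
  set c := M 0 0 with hc
  have hMc : M = c • 1 := by
    ext i j
    fin_cases i <;> fin_cases j <;>
      simp [h01, h10, h00, Matrix.smul_apply, Matrix.one_apply] <;> rfl
  have hc2 : c * c = 1 := by
    have := congrFun (congrFun hM2 0) 0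
    rw [hMc] at this
    simpa [Matrix.one_apply] using this
  have hcne : c ≠ 0 := by
    intro h
    rw [h, zero_mul] at hc2
    exact zero_ne_one hc2
  -- finish: A * M + M * A = 2c • A = 0
  have h2cA : (2 * c) • A = 0 := by
    have : A * (c • 1) + (c • 1) * A = 0 := by rw [← hMc]; exact hAM
    rw [Matrix.mul_smul, Matrix.smul_mul, mul_one, one_mul, ← add_smul] at this
    convert this using 2
    ring
  have h2c : (2 : ℂ) * c ≠ 0 := by
    exact mul_ne_zero two_ne_zero hcne
  rcases smul_eq_zero.mp h2cA with h | h
  · exact absurd h h2c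
  · exact h
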